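/- Let H be an N-dimensional real inner product space with basis (φ_i). Suppose there are constants 0 < m ≤ M such that for all coefficient vectors x ∈ ℝ^N, m ‖x‖²_{ℝ^N} ≤ ‖∑ x_i φ_i‖²_H ≤ M ‖x‖²_{ℝ^N}. Let B : H × H → ℝ be a symmetric bilinear form with c ‖v‖²_H ≤ B(v,v) ≤ C ‖v‖²_H for all v ∈ H, where 0 < c ≤ C. Let Ŝ ∈ ℝ^{N×N} be the matrix with (Ŝ x, y) = B(∑ x_i φ_i, ∑ y_i φ_i). Then Ŝ is symmetric positive definite and its condition number satisfies κ(Ŝ) ≤ (C M)/(c m). -/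

import Mathlib

open Matrix

/-- Abstract condition number estimate for the Schur complement stiffness
matrix: mass-matrix-type norm equivalence together with two-sided bounds on the
bilinear form imply `Ŝ` is symmetric positive definite with condition number
`κ(Ŝ) ≤ C M / (c m)`. -/
theorem stmt_11 {H : Type*} [NormedAddCommGroup H] [InnerProductSpace ℝ H]
    (N : ℕ) (φ : Module.Basis (Fin N) ℝ H)
    (m M : ℝ) (hm : 0 < m) (hmM : m ≤ M)
    (hequiv : ∀ x : Fin N → ℝ,
      m * ∑ i, x i ^ 2 ≤ ‖∑ i, x i • φ i‖ ^ 2 ∧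
        ‖∑ i, x i • φ i‖ ^ 2 ≤ M * ∑ i, x i ^ 2)
    (B : LinearMap.BilinForm ℝ H) (hBsym : ∀ v w : H, B v w = B w v)
    (c C : ℝ) (hc : 0 < c) (hcC : c ≤ C)
    (hB : ∀ v : H, c * ‖v‖ ^ 2 ≤ B v v ∧ B v v ≤ C * ‖v‖ ^ 2)
    (S : Matrix (Fin N) (Fin N) ℝ)
    (hS : ∀ x y : Fin N → ℝ,
      S.mulVec x ⬝ᵥ y = B (∑ i, x i • φ i) (∑ i, y i • φ i))
    (lmax lmin : ℝ)
    (hmax : Module.End.HasEigenvalue (Matrix.toLin' S) lmax)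
    (hmax' : ∀ μ : ℝ, Module.End.HasEigenvalue (Matrix.toLin' S) μ → μ ≤ lmax)
    (hmin : Module.End.HasEigenvalue (Matrix.toLin' S) lmin)
    (hmin' : ∀ μ : ℝ, Module.End.HasEigenvalue (Matrix.toLin' S) μ → lmin ≤ μ) :
    S.IsSymm ∧ (∀ x : Fin N → ℝ, x ≠ 0 → 0 < S.mulVec x ⬝ᵥ x) ∧
      lmax / lmin ≤ (C * M) / (c * m) := by
  -- key quadratic form bounds
  have key : ∀ x : Fin N → ℝ,
      c * m * ∑ i, x i ^ 2 ≤ S.mulVec x ⬝ᵥ x ∧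
        S.mulVec x ⬝ᵥ x ≤ C * M * ∑ i, x i ^ 2 := by
    intro x
    have h1 := (hequiv x).1
    have h2 := (hequiv x).2
    have h3 := (hB (∑ i, x i • φ i)).1
    have h4 := (hB (∑ i, x i • φ i)).2
    rw [hS x x]
    constructor
    · calc c * m * ∑ i, x i ^ 2 = c * (m * ∑ i, x i ^ 2) := by ring
        _ ≤ c * ‖∑ i, x i • φ i‖ ^ 2 := by nlinarith
        _ ≤ _ := h3
    · calc B (∑ i, x i • φ i) (∑ i, x i • φ i) ≤ C * ‖∑ i, x i • φ i‖ ^ 2 := h4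
        _ ≤ C * (M * ∑ i, x i ^ 2) := by nlinarith
        _ = C * M * ∑ i, x i ^ 2 := by ring
  have sumpos : ∀ x : Fin N → ℝ, x ≠ 0 → 0 < ∑ i, x i ^ 2 := by
    intro x hx
    obtain ⟨i, hi⟩ := Function.ne_iff.mp hx
    exact Finset.sum_pos' (fun i _ => sq_nonneg _)
      ⟨i, Finset.mem_univ i, pow_two_pos_of_ne_zero (by simpa using hi)⟩
  -- eigenvalue bounds
  have eig : ∀ μ : ℝ, Module.End.HasEigenvalue (Matrix.toLin' S) μ →
      c * m ≤ μ ∧ μ ≤ C * M := by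
    intro μ hμ
    obtain ⟨x, hx⟩ := hμ.exists_hasEigenvector
    have hx0 : x ≠ 0 := hx.right
    have hmul : S.mulVec x = μ • x := by
      have := hx.apply_eq_smul
      simpa [Matrix.toLin'_apply] using this
    have hdot : S.mulVec x ⬝ᵥ x = μ * ∑ i, x i ^ 2 := by
      rw [hmul]
      simp only [dotProduct, Pi.smul_apply, smul_eq_mul, Finset.mul_sum]
      exact Finset.sum_congr rfl fun k _ => by ring
    have hpos := sumpos x hx0
    have h1 := (key x).1
    have h2 := (key x).2
    rw [hdot] at h1 h2
    constructor
    · exact le_of_mul_le_mul_right (by linarith) hpos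
    · exact le_of_mul_le_mul_right (by linarith) hpos
  refine ⟨?_, ?_, ?_⟩
  · -- symmetry
    ext i j
    have h1 := hS (Pi.single j 1) (Pi.single i 1)
    have h2 := hS (Pi.single i 1) (Pi.single j 1)
    simp only [Matrix.transpose_apply]
    have e1 : S.mulVec (Pi.single j 1) ⬝ᵥ Pi.single i 1 = S i j := by
      simp [mulVec, dotProduct, Pi.single_apply]
    have e2 : S.mulVec (Pi.single i 1) ⬝ᵥ Pi.single j 1 = S j i := by
      simp [mulVec, dotProduct, Pi.single_apply]
    rw [e1] at h1
    rw [e2] at h2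
    rw [h1, h2, hBsym]
  · intro x hx
    have h1 := (key x).1
    have h2 := sumpos x hx
    calc (0:ℝ) < c * m * ∑ i, x i ^ 2 := by positivity
      _ ≤ _ := h1
  · have hminb := (eig lmin hmin).1
    have hmaxb := (eig lmax hmax).2
    have hcm : 0 < c * m := by positivity
    exact div_le_div₀ (by nlinarith) hmaxb hcm hminb
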